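/- Let p ≥ 1, q > 1 - 1/p with p > 1, b > 0, c > 0. For λ large, the largest positive root t₂(λ) of (t^p + b)^q = λ c t^(p-1) satisfies t₂(λ) = m λ^(1/(pq-p+1)) - (bq m^(1-p)/(pq-p+1)) λ^((1-p)/(pq-p+1)) (1+o(1)) as λ → ∞, where m := c^(1/(pq-p+1)). -/

import Mathlib

open Real Filter

lemma aux_deriv (p q b c m a : ℝ) (hm0 : 0 < m) :
    HasDerivAt (fun y => ((m + a*y)^p + b*y)^q - c*(m + a*y)^(p-1))
      (q*(m^p)^(q-1)*(p*m^(p-1)*a + b) - c*((p-1)*m^(p-2)*a)) 0 := by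
  have h1 : HasDerivAt (fun y : ℝ => m + a*y) a 0 := by
    simpa using ((hasDerivAt_id (0:ℝ)).const_mul a).const_add m
  have hmp : (0:ℝ) < m^p := Real.rpow_pos_of_pos hm0 p
  have h2 : HasDerivAt (fun x : ℝ => x^p) (p*m^(p-1)) m :=
    Real.hasDerivAt_rpow_const (Or.inl hm0.ne')
  have h2' : HasDerivAt (fun x : ℝ => x^p) (p*m^(p-1)) ((fun y : ℝ => m + a*y) 0) := by
    simpa using h2
  have h3 : HasDerivAt (fun y : ℝ => (m + a*y)^p) (p*m^(p-1)*a) 0 := by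
    have h := h2'.comp 0 h1; exact h
  have h4 : HasDerivAt (fun y : ℝ => (m + a*y)^p + b*y) (p*m^(p-1)*a + b) 0 := by
    exact (h3.add ((hasDerivAt_id (0:ℝ)).const_mul b)).congr_deriv (by simp)
  have h5 : HasDerivAt (fun x : ℝ => x^q) (q*(m^p)^(q-1)) ((fun y : ℝ => (m + a*y)^p + b*y) 0) := by
    have := Real.hasDerivAt_rpow_const (x := m^p) (p := q) (Or.inl hmp.ne')
    simpa using this
  have h6 : HasDerivAt (fun y : ℝ => ((m + a*y)^p + b*y)^q) (q*(m^p)^(q-1)*(p*m^(p-1)*a + b)) 0 := by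
    have h := h5.comp 0 h4; exact h
  have h7 : HasDerivAt (fun x : ℝ => x^(p-1)) ((p-1)*m^(p-2)) ((fun y : ℝ => m + a*y) 0) := by
    have := Real.hasDerivAt_rpow_const (x := m) (p := p-1) (Or.inl hm0.ne')
    have e : p - 1 - 1 = p - 2 := by ring
    simpa [e] using this
  have h8 : HasDerivAt (fun y : ℝ => (m + a*y)^(p-1)) ((p-1)*m^(p-2)*a) 0 := by
    have h := h7.comp 0 h1; exact h
  exact h6.sub (h8.const_mul c)

lemma aux_alg (p q b m e A : ℝ) (hm0 : 0 < m) (hK : 0 < p*q-p+1)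
    (hA : A = -(b*q*m^(1-p)/(p*q-p+1))) :
    q*(m^p)^(q-1)*(p*m^(p-1)*(A+e) + b)
      - m^(p*q-p+1)*((p-1)*m^(p-2)*(A+e))
    = e*((p*q-p+1)*m^(p*q-1)) := by
  subst hA
  have e1 : (m^p)^(q-1) = m^(p*q-p) := by
    rw [← Real.rpow_mul hm0.le]; congr 1; ring
  have r1 : m^(p-2) = m^(p-1)/m := by
    rw [eq_div_iff hm0.ne']
    calc m^(p-2)*m = m^(p-2)*m^(1:ℝ) := by rw [Real.rpow_one]
    _ = m^(p-1) := by rw [← Real.rpow_add hm0]; congr 1; ring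
  have r2 : m^(1-p) = 1/m^(p-1) := by
    rw [eq_div_iff (Real.rpow_pos_of_pos hm0 _).ne', ← Real.rpow_add hm0]
    norm_num
  have r3 : m^(p*q-p+1) = m^(p*q-p) * m := by
    calc m^(p*q-p+1) = m^(p*q-p)*m^(1:ℝ) := by rw [← Real.rpow_add hm0]
    _ = m^(p*q-p) * m := by rw [Real.rpow_one]
  have r4 : m^(p*q-1) = m^(p*q-p) * m^(p-1) := by
    rw [← Real.rpow_add hm0]; congr 1; ring
  rw [e1, r1, r2, r3, r4]
  have hX : (0:ℝ) < m^(p-1) := Real.rpow_pos_of_pos hm0 _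
  generalize m^(p-1) = X at hX ⊢
  generalize m^(p*q-p) = Y
  have hK' : p*q-p+1 ≠ 0 := hK.ne'
  field_simp
  have hK'' : (1 + q*p - p) ≠ 0 := by rw [show 1 + q*p - p = p*q-p+1 by ring]; exact hK'
  linear_combination (-(Y*q*b)) * mul_inv_cancel₀ hK''

lemma aux_slope (p q b c m a : ℝ) (hm0 : 0 < m) (hK : 0 < p*q-p+1) (hp0 : 0 < p)
    (hcm : m^(p*q-p+1) = c) :
    Tendsto (fun lam : ℝ =>
      (((m + a*lam^(-(p/(p*q-p+1))))^p + b*lam^(-(p/(p*q-p+1))))^q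
        - c*(m + a*lam^(-(p/(p*q-p+1))))^(p-1)) / lam^(-(p/(p*q-p+1)))) atTop
      (nhds (q*(m^p)^(q-1)*(p*m^(p-1)*a + b) - c*((p-1)*m^(p-2)*a))) := by
  set g : ℝ → ℝ := fun y => ((m + a*y)^p + b*y)^q - c*(m + a*y)^(p-1) with hg
  have hg0 : g 0 = 0 := by
    have e1 : ((m + a*0)^p + b*0)^q = (m^p)^q := by norm_num
    have e2 : (m^p)^q = m^(p*q) := by rw [← Real.rpow_mul hm0.le]
    have e3 : c*(m + a*0)^(p-1) = m^(p*q-p+1) * m^(p-1) := by rw [← hcm]; norm_num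
    have e4 : m^(p*q-p+1) * m^(p-1) = m^(p*q) := by
      rw [← Real.rpow_add hm0]; congr 1; ring
    simp only [hg, e1, e2, e3, e4, sub_self]
  have hder := aux_deriv p q b c m a hm0
  have hslope : Tendsto (slope g 0) (nhdsWithin 0 {(0:ℝ)}ᶜ)
      (nhds (q*(m^p)^(q-1)*(p*m^(p-1)*a + b) - c*((p-1)*m^(p-2)*a))) :=
    hasDerivAt_iff_tendsto_slope.mp hder
  have hy : Tendsto (fun lam : ℝ => lam^(-(p/(p*q-p+1)))) atTop (nhdsWithin 0 {(0:ℝ)}ᶜ) := by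
    apply tendsto_nhdsWithin_of_tendsto_nhds_of_eventually_within
    · exact tendsto_rpow_neg_atTop (by positivity)
    · filter_upwards [eventually_gt_atTop (0:ℝ)] with lam hlam
      exact (Real.rpow_pos_of_pos hlam _).ne'
  have := hslope.comp hy
  refine this.congr (fun lam => ?_)
  simp only [Function.comp_apply, slope_def_field, hg0, sub_zero]
  rfl

lemma aux_mono (p q b : ℝ) (hp : 1 < p) (hq0 : 0 < q) (hb : 0 < b) (hK : 0 < p*q-p+1) :
    StrictMonoOn (fun s : ℝ => (s^p + b)^q * s^(1-p))
      (Set.Ici (((p-1)*b/(p*q-p+1))^(1/p) + 1)) := by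
  have hz : (0:ℝ) ≤ (p-1)*b/(p*q-p+1) := by
    apply div_nonneg _ hK.le; nlinarith
  set S := ((p-1)*b/(p*q-p+1))^(1/p) + 1 with hS
  have hS1 : (1:ℝ) ≤ S := le_add_of_nonneg_left (Real.rpow_nonneg hz _)
  have hS0 : (0:ℝ) < S := by linarith
  apply strictMonoOn_of_deriv_pos (convex_Ici S)
  · apply continuousOn_of_forall_continuousAt
    intro x hx
    have hx0 : (0:ℝ) < x := lt_of_lt_of_le hS0 hx
    have hxb : (0:ℝ) < x^p + b := by positivity
    have c1 : ContinuousAt (fun s : ℝ => s^p + b) x :=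
      (Real.continuousAt_rpow_const x p (Or.inl hx0.ne')).add continuousAt_const
    have c2 : ContinuousAt (fun t : ℝ => t^q) (x^p + b) :=
      Real.continuousAt_rpow_const _ q (Or.inl hxb.ne')
    have c3 : ContinuousAt (fun s : ℝ => (s^p+b)^q) x :=
      ContinuousAt.comp (f := fun s : ℝ => s^p + b) c2 c1
    exact c3.mul (Real.continuousAt_rpow_const x (1-p) (Or.inl hx0.ne'))
  · intro x hx
    rw [interior_Ici] at hx
    have hx0 : (0:ℝ) < x := lt_trans hS0 hx
    have hxb : (0:ℝ) < x^p + b := by positivity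
    have h1 : HasDerivAt (fun s : ℝ => s^p + b) (p*x^(p-1)) x := by
      simpa using (Real.hasDerivAt_rpow_const (x := x) (p := p) (Or.inl hx0.ne')).add_const b
    have h2 : HasDerivAt (fun t : ℝ => t^q) (q*(x^p+b)^(q-1)) ((fun s : ℝ => s^p + b) x) :=
      Real.hasDerivAt_rpow_const (Or.inl hxb.ne')
    have h3 : HasDerivAt (fun s : ℝ => (s^p+b)^q) (q*(x^p+b)^(q-1)*(p*x^(p-1))) x := by
      have h := h2.comp x h1; exact h
    have h4 : HasDerivAt (fun s : ℝ => s^(1-p)) ((1-p)*x^(1-p-1)) x :=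
      Real.hasDerivAt_rpow_const (Or.inl hx0.ne')
    have h5 : HasDerivAt (fun s : ℝ => (s^p + b)^q * s^(1-p))
        (q*(x^p+b)^(q-1)*(p*x^(p-1)) * x^(1-p) + (x^p+b)^q * ((1-p)*x^(1-p-1))) x := h3.mul h4
    rw [h5.deriv]
    have E1 : x^(p-1)*x^(1-p) = 1 := by rw [← Real.rpow_add hx0]; norm_num
    have E2 : (x^p+b)^q = (x^p+b)^(q-1)*(x^p+b) := by
      calc (x^p+b)^q = (x^p+b)^(q-1+1) := by ring_nf
      _ = (x^p+b)^(q-1)*(x^p+b)^(1:ℝ) := Real.rpow_add hxb _ _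
      _ = _ := by rw [Real.rpow_one]
    have E3 : x^(1-p-1) = x^(-p) := by congr 1; ring
    have E4 : x^(-p)*x^p = 1 := by rw [← Real.rpow_add hx0]; norm_num
    rw [E2, E3]
    have key : q*(x^p+b)^(q-1)*(p*x^(p-1)) * x^(1-p) + (x^p+b)^(q-1)*(x^p+b) * ((1-p)*x^(-p))
        = (x^p+b)^(q-1) * x^(-p) * ((p*q-p+1)*x^p - (p-1)*b) := by
      linear_combination (q*p*(x^p+b)^(q-1)) * E1 + ((1-p-(p*q-p+1))*(x^p+b)^(q-1)) * E4
    rw [key]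
    have hxS : ((p-1)*b/(p*q-p+1))^(1/p) < x := by
      calc ((p-1)*b/(p*q-p+1))^(1/p) < S := by rw [hS]; linarith
      _ < x := hx
    have hxp : (p-1)*b/(p*q-p+1) < x^p := by
      have := Real.rpow_lt_rpow (Real.rpow_nonneg hz _) hxS (by linarith : (0:ℝ) < p)
      rwa [← Real.rpow_mul hz, one_div, inv_mul_cancel₀ (by linarith : p ≠ 0), Real.rpow_one] at this
    have hpos : 0 < (p*q-p+1)*x^p - (p-1)*b := by
      rw [div_lt_iff₀ hK] at hxp
      nlinarith
    have h6 := Real.rpow_pos_of_pos hxb (q-1)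
    have h7 := Real.rpow_pos_of_pos hx0 (-p)
    positivity

lemma aux_scale (p q b c lam v : ℝ) (hb : 0 < b) (hK : 0 < p*q-p+1)
    (hlam : 0 < lam) (hv : 0 < v) :
    ((lam^(1/(p*q-p+1)) * v)^p + b)^q - lam * c * (lam^(1/(p*q-p+1)) * v)^(p-1)
    = lam^(p*q/(p*q-p+1)) *
      ((v^p + b*lam^(-(p/(p*q-p+1))))^q - c * v^(p-1)) := by
  have hL : (0:ℝ) < lam^(1/(p*q-p+1)) := Real.rpow_pos_of_pos hlam _
  have h1 : (lam^(1/(p*q-p+1)) * v)^p = lam^(p/(p*q-p+1)) * v^p := by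
    rw [Real.mul_rpow hL.le hv.le, ← Real.rpow_mul hlam.le]
    congr 2; ring
  have h2 : (lam^(1/(p*q-p+1)) * v)^(p-1) = lam^((p-1)/(p*q-p+1)) * v^(p-1) := by
    rw [Real.mul_rpow hL.le hv.le, ← Real.rpow_mul hlam.le]
    congr 2; ring
  have hb' : b = lam^(p/(p*q-p+1)) * (b * lam^(-(p/(p*q-p+1)))) := by
    rw [← mul_assoc, mul_comm (lam^(p/(p*q-p+1))) b, mul_assoc, ← Real.rpow_add hlam]
    norm_num
  have h3 : (lam^(1/(p*q-p+1)) * v)^p + b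
      = lam^(p/(p*q-p+1)) * (v^p + b*lam^(-(p/(p*q-p+1)))) := by
    rw [h1]; nth_rewrite 1 [hb']; ring
  have hin : (0:ℝ) ≤ v^p + b*lam^(-(p/(p*q-p+1))) := by
    have hv' : (0:ℝ) < v^p := Real.rpow_pos_of_pos hv _
    have : (0:ℝ) < lam^(-(p/(p*q-p+1))) := Real.rpow_pos_of_pos hlam _
    positivity
  have h4 : ((lam^(1/(p*q-p+1)) * v)^p + b)^q
      = lam^(p*q/(p*q-p+1)) * (v^p + b*lam^(-(p/(p*q-p+1))))^q := by
    rw [h3, Real.mul_rpow (Real.rpow_pos_of_pos hlam _).le hin, ← Real.rpow_mul hlam.le]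
    congr 2; ring
  have h5 : lam * c * (lam^(1/(p*q-p+1)) * v)^(p-1)
      = lam^(p*q/(p*q-p+1)) * (c * v^(p-1)) := by
    rw [h2]
    have e : lam * lam^((p-1)/(p*q-p+1)) = lam^(p*q/(p*q-p+1)) := by
      nth_rewrite 1 [← Real.rpow_one lam]
      rw [← Real.rpow_add hlam]
      congr 1; rw [eq_div_iff hK.ne', add_mul, div_mul_cancel₀ _ hK.ne']; ring
    calc lam * c * (lam^((p-1)/(p*q-p+1)) * v^(p-1))
        = (lam * lam^((p-1)/(p*q-p+1))) * (c * v^(p-1)) := by ring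
      _ = _ := by rw [e]
  rw [h4, h5]; ring

lemma aux_big (p q b c lam s : ℝ) (hq0 : 0 < q) (hb : 0 < b) (hc : 0 < c)
    (hK : 0 < p*q-p+1) (hlam : 0 < lam) (hs0 : 0 < s)
    (hs : (c*lam)^(1/(p*q-p+1)) ≤ s) :
    lam*c*s^(p-1) < (s^p+b)^q := by
  have h1 : (s^p)^q < (s^p+b)^q :=
    Real.rpow_lt_rpow (Real.rpow_pos_of_pos hs0 p).le (by linarith) hq0
  have h2 : (s^p)^q = s^(p*q-p+1) * s^(p-1) := by
    rw [← Real.rpow_mul hs0.le, ← Real.rpow_add hs0]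
    congr 1; ring
  have h3 : c*lam ≤ s^(p*q-p+1) := by
    have := Real.rpow_le_rpow (Real.rpow_nonneg (by positivity) _) hs hK.le
    rwa [← Real.rpow_mul (by positivity : (0:ℝ) ≤ c*lam), one_div,
      inv_mul_cancel₀ hK.ne', Real.rpow_one] at this
  calc lam*c*s^(p-1) ≤ s^(p*q-p+1) * s^(p-1) := by
        have := Real.rpow_pos_of_pos hs0 (p-1)
        nlinarith
    _ = (s^p)^q := h2.symm
    _ < (s^p+b)^q := h1

theorem stmt14 (p q b c : ℝ) (hp : 1 < p) (hq : q > 1 - 1/p)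
    (hb : 0 < b) (hc : 0 < c)
    (m : ℝ) (hm : m = c ^ (1/(p*q - p + 1)))
    (t₂ : ℝ → ℝ)
    (hroot : ∀ᶠ lam in atTop, 0 < t₂ lam ∧
      ((t₂ lam) ^ p + b) ^ q = lam * c * (t₂ lam) ^ (p-1) ∧
      ∀ s : ℝ, 0 < s → (s ^ p + b) ^ q = lam * c * s ^ (p-1) → s ≤ t₂ lam) :
    Tendsto
      (fun lam => (t₂ lam - m * lam ^ (1/(p*q - p + 1))) /
        lam ^ ((1-p)/(p*q - p + 1))) atTop
      (nhds (-(b * q * m ^ (1-p) / (p*q - p + 1)))) := by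
  have hp0 : (0:ℝ) < p := by linarith
  have hq0 : (0:ℝ) < q := by
    have h1 : 1/p < 1 := by rw [div_lt_one hp0]; linarith
    linarith
  have hK : (0:ℝ) < p*q - p + 1 := by
    have h1 := mul_lt_mul_of_pos_left hq hp0
    have h2 : p * (1 - 1/p) = p - 1 := by field_simp
    rw [h2] at h1; linarith
  have hm0 : (0:ℝ) < m := by rw [hm]; positivity
  have hcm : m ^ (p*q-p+1) = c := by
    rw [hm, ← Real.rpow_mul hc.le, one_div, inv_mul_cancel₀ hK.ne', Real.rpow_one]
  set A : ℝ := -(b * q * m ^ (1-p) / (p*q - p + 1)) with hA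
  have hmpq1 : (0:ℝ) < m^(p*q-1) := Real.rpow_pos_of_pos hm0 _
  rw [Metric.tendsto_nhds]
  intro ε hε
  set e : ℝ := ε/2 with he
  have he0 : 0 < e := by positivity
  -- upper bound numerator eventually positive
  have hDp : q*(m^p)^(q-1)*(p*m^(p-1)*(A+e) + b) - c*((p-1)*m^(p-2)*(A+e))
      = e*((p*q-p+1)*m^(p*q-1)) := by
    rw [← hcm]; exact aux_alg p q b m e A hm0 hK hA
  have hDm : q*(m^p)^(q-1)*(p*m^(p-1)*(A+(-e)) + b) - c*((p-1)*m^(p-2)*(A+(-e)))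
      = (-e)*((p*q-p+1)*m^(p*q-1)) := by
    rw [← hcm]; exact aux_alg p q b m (-e) A hm0 hK hA
  have hsp := aux_slope p q b c m (A+e) hm0 hK hp0 hcm
  rw [hDp] at hsp
  have hsm := aux_slope p q b c m (A+(-e)) hm0 hK hp0 hcm
  rw [hDm] at hsm
  have ev_p : ∀ᶠ lam in atTop, 0 <
      ((m + (A+e)*lam^(-(p/(p*q-p+1))))^p + b*lam^(-(p/(p*q-p+1))))^q
        - c*(m + (A+e)*lam^(-(p/(p*q-p+1))))^(p-1) := by
    have hpos : (0:ℝ) < e*((p*q-p+1)*m^(p*q-1)) := by positivity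
    filter_upwards [hsp.eventually (eventually_gt_nhds hpos), eventually_gt_atTop (0:ℝ)]
      with lam h1 h2
    have hy : (0:ℝ) < lam^(-(p/(p*q-p+1))) := Real.rpow_pos_of_pos h2 _
    have := mul_pos h1 hy
    rwa [div_mul_cancel₀ _ hy.ne'] at this
  have ev_m : ∀ᶠ lam in atTop,
      ((m + (A+(-e))*lam^(-(p/(p*q-p+1))))^p + b*lam^(-(p/(p*q-p+1))))^q
        - c*(m + (A+(-e))*lam^(-(p/(p*q-p+1))))^(p-1) < 0 := by
    have hneg : (-e)*((p*q-p+1)*m^(p*q-1)) < 0 := by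
      have : (0:ℝ) < e*((p*q-p+1)*m^(p*q-1)) := by positivity
      linarith
    filter_upwards [hsm.eventually (eventually_lt_nhds hneg), eventually_gt_atTop (0:ℝ)]
      with lam h1 h2
    have hy : (0:ℝ) < lam^(-(p/(p*q-p+1))) := Real.rpow_pos_of_pos h2 _
    have := mul_lt_mul_of_pos_right h1 hy
    rwa [div_mul_cancel₀ _ hy.ne', zero_mul] at this
  -- eventual positivity of the m + a*y terms
  have ev_w : ∀ a : ℝ, ∀ᶠ lam in atTop, 0 < m + a*lam^(-(p/(p*q-p+1))) := by
    intro a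
    have h1 : Tendsto (fun lam : ℝ => m + a*lam^(-(p/(p*q-p+1)))) atTop (nhds (m + a*0)) :=
      tendsto_const_nhds.add ((tendsto_rpow_neg_atTop (by positivity)).const_mul a)
    rw [(by ring : m + a*0 = m)] at h1
    exact h1.eventually (eventually_gt_nhds hm0)
  -- eventually u ≥ S₀
  have ev_uS : ∀ᶠ lam in atTop,
      ((p-1)*b/(p*q-p+1))^(1/p) + 1 ≤ lam^(1/(p*q-p+1)) * (m + (A+e)*lam^(-(p/(p*q-p+1)))) := by
    have h1 : Tendsto (fun lam : ℝ => m + (A+e)*lam^(-(p/(p*q-p+1)))) atTop (nhds (m + (A+e)*0)) :=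
      tendsto_const_nhds.add ((tendsto_rpow_neg_atTop (by positivity)).const_mul (A+e))
    rw [(by ring : m + (A+e)*0 = m)] at h1
    have h2 : Tendsto (fun lam : ℝ => lam^(1/(p*q-p+1))) atTop atTop :=
      tendsto_rpow_atTop (by positivity)
    exact (h2.atTop_mul_pos hm0 h1).eventually_ge_atTop _
  -- upper bound
  have upper : ∀ᶠ lam in atTop,
      t₂ lam < lam^(1/(p*q-p+1)) * (m + (A+e)*lam^(-(p/(p*q-p+1)))) := by
    filter_upwards [hroot, ev_p, ev_w (A+e), ev_uS, eventually_gt_atTop (0:ℝ)]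
      with lam hr hgp hw hS hl
    obtain ⟨ht0, hteq, hmax⟩ := hr
    set w : ℝ := m + (A+e)*lam^(-(p/(p*q-p+1))) with hwdef
    set u : ℝ := lam^(1/(p*q-p+1)) * w with hudef
    have hu0 : 0 < u := mul_pos (Real.rpow_pos_of_pos hl _) hw
    by_contra hcon
    push_neg at hcon
    -- F u > lam * c
    have hscale := aux_scale p q b c lam w hb hK hl hw
    have hgt : lam * c * u^(p-1) < (u^p + b)^q := by
      rw [hudef]
      have h0 : 0 < lam^(p*q/(p*q-p+1)) *
          ((w^p + b*lam^(-(p/(p*q-p+1))))^q - c * w^(p-1)) :=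
        mul_pos (Real.rpow_pos_of_pos hl _) hgp
      rw [← hscale] at h0
      linarith
    have hup1 : (0:ℝ) < u^(1-p) := Real.rpow_pos_of_pos hu0 _
    have hFu : lam * c < (u^p + b)^q * u^(1-p) := by
      have h1 := mul_lt_mul_of_pos_right hgt hup1
      have h2 : u^(p-1) * u^(1-p) = 1 := by
        rw [← Real.rpow_add hu0]; norm_num
      calc lam * c = lam * c * (u^(p-1) * u^(1-p)) := by rw [h2]; ring
        _ = lam * c * u^(p-1) * u^(1-p) := by ring
        _ < (u^p + b)^q * u^(1-p) := h1
    -- F t₂ = lam * c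
    have ht1 : (0:ℝ) < (t₂ lam)^(1-p) := Real.rpow_pos_of_pos ht0 _
    have hFt : ((t₂ lam)^p + b)^q * (t₂ lam)^(1-p) = lam * c := by
      rw [hteq]
      have h2 : (t₂ lam)^(p-1) * (t₂ lam)^(1-p) = 1 := by
        rw [← Real.rpow_add ht0]; norm_num
      calc lam * c * (t₂ lam)^(p-1) * (t₂ lam)^(1-p)
          = lam * c * ((t₂ lam)^(p-1) * (t₂ lam)^(1-p)) := by ring
        _ = lam * c := by rw [h2]; ring
    -- monotonicity
    have hmono := aux_mono p q b hp hq0 hb hK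
    have humem : u ∈ Set.Ici (((p-1)*b/(p*q-p+1))^(1/p) + 1) := hS
    have htmem : t₂ lam ∈ Set.Ici (((p-1)*b/(p*q-p+1))^(1/p) + 1) :=
      le_trans hS hcon
    have := hmono.monotoneOn humem htmem hcon
    rw [hFt] at this
    linarith
  -- lower bound
  have lower : ∀ᶠ lam in atTop,
      lam^(1/(p*q-p+1)) * (m + (A+(-e))*lam^(-(p/(p*q-p+1)))) ≤ t₂ lam := by
    filter_upwards [hroot, ev_m, ev_w (A+(-e)), eventually_gt_atTop (0:ℝ)]
      with lam hr hgm hw hl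
    obtain ⟨ht0, hteq, hmax⟩ := hr
    set w : ℝ := m + (A+(-e))*lam^(-(p/(p*q-p+1))) with hwdef
    set l : ℝ := lam^(1/(p*q-p+1)) * w with hldef
    have hl0 : 0 < l := mul_pos (Real.rpow_pos_of_pos hl _) hw
    set T : ℝ := l + (c*lam)^(1/(p*q-p+1)) + 1 with hT
    have hcl : (0:ℝ) ≤ (c*lam)^(1/(p*q-p+1)) := Real.rpow_nonneg (by positivity) _
    have hlT : l ≤ T := by rw [hT]; linarith
    have hT0 : 0 < T := by rw [hT]; linarith
    set G : ℝ → ℝ := fun s => (s^p+b)^q - lam*c*s^(p-1) with hG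
    have hGl : G l < 0 := by
      have hscale := aux_scale p q b c lam w hb hK hl hw
      have h0 : lam^(p*q/(p*q-p+1)) *
          ((w^p + b*lam^(-(p/(p*q-p+1))))^q - c * w^(p-1)) < 0 :=
        mul_neg_of_pos_of_neg (Real.rpow_pos_of_pos hl _) hgm
      rw [← hscale] at h0
      simpa [hG, hldef] using h0
    have hGT : 0 < G T := by
      have := aux_big p q b c lam T hq0 hb hc hK hl hT0 (by rw [hT]; linarith)
      simp only [hG]
      linarith
    have hcont : ContinuousOn G (Set.Icc l T) := by
      apply continuousOn_of_forall_continuousAt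
      intro x hx
      have hx0 : (0:ℝ) < x := lt_of_lt_of_le hl0 hx.1
      have hxb : (0:ℝ) < x^p + b := by positivity
      have c1 : ContinuousAt (fun s : ℝ => s^p + b) x :=
        (Real.continuousAt_rpow_const x p (Or.inl hx0.ne')).add continuousAt_const
      have c2 : ContinuousAt (fun t : ℝ => t^q) (x^p + b) :=
        Real.continuousAt_rpow_const _ q (Or.inl hxb.ne')
      have c3 : ContinuousAt (fun s : ℝ => (s^p+b)^q) x :=
        ContinuousAt.comp (f := fun s : ℝ => s^p + b) c2 c1
      exact c3.sub ((continuousAt_const.mul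
        (Real.continuousAt_rpow_const x (p-1) (Or.inl hx0.ne'))))
    have hmem : (0:ℝ) ∈ Set.Icc (G l) (G T) := ⟨hGl.le, hGT.le⟩
    obtain ⟨s, hsmem, hGs⟩ := intermediate_value_Icc hlT hcont hmem
    have hs0 : 0 < s := lt_of_lt_of_le hl0 hsmem.1
    have hseq : (s^p + b)^q = lam * c * s^(p-1) := by
      have : (s^p+b)^q - lam*c*s^(p-1) = 0 := hGs
      linarith
    exact le_trans hsmem.1 (hmax s hs0 hseq)
  -- conclude
  filter_upwards [upper, lower, eventually_gt_atTop (0:ℝ)] with lam hup hlow hl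
  have hsplit : ∀ a : ℝ, lam^(1/(p*q-p+1)) * (m + a*lam^(-(p/(p*q-p+1))))
      = m*lam^(1/(p*q-p+1)) + a*lam^((1-p)/(p*q-p+1)) := by
    intro a
    have h1 : lam^(1/(p*q-p+1)) * lam^(-(p/(p*q-p+1))) = lam^((1-p)/(p*q-p+1)) := by
      rw [← Real.rpow_add hl]; congr 1; ring
    calc lam^(1/(p*q-p+1)) * (m + a*lam^(-(p/(p*q-p+1))))
        = m*lam^(1/(p*q-p+1)) + a*(lam^(1/(p*q-p+1)) * lam^(-(p/(p*q-p+1)))) := by ring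
      _ = _ := by rw [h1]
  rw [hsplit] at hup hlow
  have hP : (0:ℝ) < lam^((1-p)/(p*q-p+1)) := Real.rpow_pos_of_pos hl _
  have hub : (t₂ lam - m * lam^(1/(p*q-p+1))) / lam^((1-p)/(p*q-p+1)) < A + e := by
    rw [div_lt_iff₀ hP]
    linarith
  have hlb : A + (-e) ≤ (t₂ lam - m * lam^(1/(p*q-p+1))) / lam^((1-p)/(p*q-p+1)) := by
    rw [le_div_iff₀ hP]
    linarith
  rw [Real.dist_eq, abs_lt]
  constructor <;> [skip; skip] <;> simp only [he] at hub hlb ⊢ <;> linarith
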